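/- For any symmetric positive definite matrices Σ̂ and Σ₀, 2(-√tr(Σ̂⁻¹) - √tr(Σ₀⁻¹) + tr(Σ̂⁻¹Σ₀Σ̂⁻¹)/√tr(Σ̂⁻¹) + tr(Σ₀⁻¹Σ̂Σ₀⁻¹)/√tr(Σ₀⁻¹)) ≥ 2·g(√tr(Σ̂⁻¹), √tr(Σ₀⁻¹)) ≥ 0, where g(a,b) = -a - b + b³/a² + a³/b². -/

import Mathlib

open Matrix Real

/-- Frobenius Cauchy–Schwarz for real square matrices. -/
lemma frob_cs {n : Type*} [Fintype n] (M N : Matrix n n ℝ) :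
    (Mᵀ * N).trace ^ 2 ≤ (Mᵀ * M).trace * (Nᵀ * N).trace := by
  have h : ∀ A B : Matrix n n ℝ,
      (Aᵀ * B).trace = ∑ p : n × n, A p.1 p.2 * B p.1 p.2 := by
    intro A B
    rw [Matrix.trace, Fintype.sum_prod_type]
    simp only [Matrix.diag, Matrix.mul_apply, Matrix.transpose_apply]
    rw [Finset.sum_comm]
  rw [h, h, h]
  simpa [sq] using Finset.sum_mul_sq_le_sq_mul_sq Finset.univ
    (fun p : n × n => M p.1 p.2) (fun p : n × n => N p.1 p.2)

/-- Key trace inequality: `tr(P)² ≤ tr(PQP)·tr(Q⁻¹)` for positive definite `P, Q`. -/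
lemma key_trace_ineq {n : Type*} [Fintype n] [DecidableEq n]
    (P Q : Matrix n n ℝ) (hP : P.PosDef) (hQ : Q.PosDef) :
    P.trace ^ 2 ≤ (P * Q * P).trace * Q⁻¹.trace := by
  obtain ⟨R, hRR, hRherm⟩ : ∃ R : Matrix n n ℝ, R * R = Q ∧ Rᴴ = R := by
    open scoped MatrixOrder in
    exact ⟨CFC.sqrt Q, CFC.sqrt_mul_sqrt_self Q hQ.posSemidef.nonneg,
      (Matrix.nonneg_iff_posSemidef.mp (CFC.sqrt_nonneg Q)).1⟩
  have hRt : Rᵀ = R := by simpa using hRherm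
  have hPt : Pᵀ = P := (by simpa using hP.1 : P.IsSymm)
  have hdet : IsUnit R.det := by
    have : R.det * R.det = Q.det := by rw [← Matrix.det_mul, hRR]
    have hQd : 0 < Q.det := hQ.det_pos
    have : R.det ≠ 0 := by
      intro h0
      rw [h0, mul_zero] at this
      exact hQd.ne (by linarith)
    exact isUnit_iff_ne_zero.mpr this
  have hRinv : R * R⁻¹ = 1 := Matrix.mul_nonsing_inv R hdet
  have hRinvT : (R⁻¹)ᵀ = R⁻¹ := by rw [Matrix.transpose_nonsing_inv, hRt]
  have hcs := frob_cs (R * P) (R⁻¹)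
  have e1 : ((R * P)ᵀ * R⁻¹).trace = P.trace := by
    rw [Matrix.transpose_mul, hRt, hPt, mul_assoc, hRinv, mul_one]
  have e2 : ((R * P)ᵀ * (R * P)).trace = (P * Q * P).trace := by
    rw [Matrix.transpose_mul, hRt, hPt]
    rw [show P * R * (R * P) = P * (R * R) * P by simp [mul_assoc], hRR]
  have e3 : ((R⁻¹)ᵀ * R⁻¹).trace = Q⁻¹.trace := by
    rw [hRinvT, ← Matrix.mul_inv_rev, hRR]
  rwa [e1, e2, e3] at hcs

lemma posdef_trace_pos {d : ℕ} (hd : 0 < d) (M : Matrix (Fin d) (Fin d) ℝ)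
    (hM : M.PosDef) : 0 < M.trace := by
  rw [Matrix.trace]
  have hdiag : ∀ i, 0 < M.diag i := by
    intro i
    have := hM.dotProduct_mulVec_pos (x := Pi.single i 1) (by
      intro h
      have := congrFun h i
      simp at this)
    simpa [dotProduct, Matrix.mulVec, Pi.single_apply, Finset.mul_sum,
      Matrix.diag] using this
  exact Finset.sum_pos (fun i _ => hdiag i) ⟨⟨0, hd⟩, Finset.mem_univ _⟩

theorem trace_chain_ineq {d : ℕ} (Shat S0 : Matrix (Fin d) (Fin d) ℝ)
    (h1 : Shat.PosDef) (h1s : Shat.IsSymm) (h2 : S0.PosDef) (h2s : S0.IsSymm) :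
    letI g : ℝ → ℝ → ℝ := fun a b => -a - b + b ^ 3 / a ^ 2 + a ^ 3 / b ^ 2
    2 * (-Real.sqrt ((Shat⁻¹).trace) - Real.sqrt ((S0⁻¹).trace)
        + (Shat⁻¹ * S0 * Shat⁻¹).trace / Real.sqrt ((Shat⁻¹).trace)
        + (S0⁻¹ * Shat * S0⁻¹).trace / Real.sqrt ((S0⁻¹).trace)) ≥
      2 * g (Real.sqrt ((Shat⁻¹).trace)) (Real.sqrt ((S0⁻¹).trace)) ∧
    2 * g (Real.sqrt ((Shat⁻¹).trace)) (Real.sqrt ((S0⁻¹).trace)) ≥ 0 := by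
  beta_reduce
  rcases Nat.eq_zero_or_pos d with hd | hd
  · subst hd
    have h0 : ∀ M : Matrix (Fin 0) (Fin 0) ℝ, M.trace = 0 := by
      intro M; simp [Matrix.trace]
    simp only [h0]
    norm_num
  · have hP1 : (Shat⁻¹).PosDef := h1.inv
    have hP2 : (S0⁻¹).PosDef := h2.inv
    have ht1 : 0 < (Shat⁻¹).trace := posdef_trace_pos hd _ hP1
    have ht2 : 0 < (S0⁻¹).trace := posdef_trace_pos hd _ hP2
    set a := Real.sqrt ((Shat⁻¹).trace) with ha
    set b := Real.sqrt ((S0⁻¹).trace) with hb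
    have hapos : 0 < a := Real.sqrt_pos.mpr ht1
    have hbpos : 0 < b := Real.sqrt_pos.mpr ht2
    have ha2 : a ^ 2 = (Shat⁻¹).trace := Real.sq_sqrt ht1.le
    have hb2 : b ^ 2 = (S0⁻¹).trace := Real.sq_sqrt ht2.le
    have hk1 : (Shat⁻¹).trace ^ 2 ≤ (Shat⁻¹ * S0 * Shat⁻¹).trace * (S0⁻¹).trace :=
      key_trace_ineq _ _ hP1 h2
    have hk2 : (S0⁻¹).trace ^ 2 ≤ (S0⁻¹ * Shat * S0⁻¹).trace * (Shat⁻¹).trace :=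
      key_trace_ineq _ _ hP2 h1
    set u1 := (Shat⁻¹ * S0 * Shat⁻¹).trace with hu1
    set u2 := (S0⁻¹ * Shat * S0⁻¹).trace with hu2
    rw [← ha2, ← hb2] at hk1 hk2
    -- hk1 : (a^2)^2 ≤ u1 * b^2 ; hk2 : (b^2)^2 ≤ u2 * a^2
    have hterm1 : u1 / a ≥ a ^ 3 / b ^ 2 := by
      rw [ge_iff_le, div_le_div_iff₀ (by positivity) hapos]
      nlinarith [hk1]
    have hterm2 : u2 / b ≥ b ^ 3 / a ^ 2 := by
      rw [ge_iff_le, div_le_div_iff₀ (by positivity) hbpos]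
      nlinarith [hk2]
    constructor
    · nlinarith [hterm1, hterm2]
    · have : b ^ 3 / a ^ 2 + a ^ 3 / b ^ 2 ≥ a + b := by
        rw [ge_iff_le, div_add_div _ _ (by positivity) (by positivity),
          le_div_iff₀ (by positivity)]
        nlinarith [sq_nonneg (a - b), sq_nonneg (a + b), mul_pos hapos hbpos,
          sq_nonneg (a*a - b*b), mul_pos (mul_pos hapos hbpos) (mul_pos hapos hbpos)]
      linarith
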